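/- For every real number μ with −1 < μ ≤ −1/2, the skew-symmetric bilinear bracket on ℝ⁷ determined (via the convention dα(x,y) = −α([x,y]) for 1-forms α) by the structure equations de¹ = e⁴⁵, de² = −2μ e²⁷, de³ = −2 e³⁷, de⁴ = 2 e¹⁵, de⁵ = e¹⁴, de⁶ = 2(1+μ) e⁶⁷, de⁷ = 0 (with respect to the dual basis e¹,…,e⁷ of the standard basis e₁,…,e₇) satisfies the Jacobi identity, hence defines a Lie algebra 𝔤_μ. -/
import Mathlib


/-!
Common framework: unbundled exterior forms on ℝ⁷, wedge product, interior product,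
Chevalley–Eilenberg differential of a Lie bracket, induced inner products on forms,
derived series, and the Lie algebras / G₂-structures from the paper
"Laplacian flow solitons on non-solvable Lie groups" (Fino–Raffero).
-/

open scoped BigOperators

namespace G2Solitons

/-- The underlying vector space ℝ⁷. -/
abbrev V7 : Type := Fin 7 → ℝ

/-- Unbundled `k`-forms: real-valued functions of `k` vectors of ℝ⁷. -/
abbrev Form (k : ℕ) : Type := (Fin k → V7) → ℝ

/-- Standard basis of ℝ⁷. -/
def stdB (i : Fin 7) : V7 := fun j => if j = i then 1 else 0

/-- The basic `k`-form `e^{i₁} ∧ ⋯ ∧ e^{i_k}` (determinant convention, 0-indexed). -/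
def eB {k : ℕ} (idx : Fin k → Fin 7) : Form k :=
  fun v => Matrix.det (Matrix.of fun a b : Fin k => v a (idx b))

/-- Wedge product of a `p`-form and a `q`-form (convention
`(α∧β)(v) = (p!q!)⁻¹ ∑_σ sgn σ · α(v∘σ|_{first p}) β(v∘σ|_{last q})`). -/
noncomputable def wedge {p q : ℕ} (α : Form p) (β : Form q) : Form (p + q) := fun v =>
  ((p.factorial * q.factorial : ℕ) : ℝ)⁻¹ *
    ∑ σ : Equiv.Perm (Fin (p + q)),
      ((Equiv.Perm.sign σ : ℤ) : ℝ) *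
        (α (fun i => v (σ (Fin.castAdd q i))) * β (fun j => v (σ (Fin.natAdd p j))))

/-- Interior product of a vector with a `(k+1)`-form. -/
def iprod {k : ℕ} (u : V7) (α : Form (k + 1)) : Form k := fun v => α (Fin.cons u v)

/-- Chevalley–Eilenberg differential of a `(k+1)`-form with respect to a bracket:
`(dα)(x₀,…,x_{k+1}) = ∑_{i<j} (-1)^{i+j} α([xᵢ,xⱼ], x₀,…,x̂ᵢ,…,x̂ⱼ,…,x_{k+1})`. -/
def dCE {k : ℕ} (br : V7 → V7 → V7) (α : Form (k + 1)) : Form (k + 2) := fun v =>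
  ∑ i : Fin (k + 2), ∑ j : Fin (k + 2),
    if (i : ℕ) < (j : ℕ) then
      (-1 : ℝ) ^ ((i : ℕ) + (j : ℕ)) *
        α (Fin.cons (br (v i) (v j)) fun l : Fin k =>
            if (l : ℕ) < (i : ℕ) then v ⟨(l : ℕ), by omega⟩
            else if (l : ℕ) + 1 < (j : ℕ) then v ⟨(l : ℕ) + 1, by omega⟩
            else v ⟨(l : ℕ) + 2, by omega⟩)
    else 0

/-- Inner product on `k`-forms induced by the diagonal metric `g = ∑ᵢ c i (e^i)²`,
determined by declaring `{(c i₁ ⋯ c i_k)^{-1/2} e^{i₁⋯i_k} : i₁ < ⋯ < i_k}` orthonormal. -/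
noncomputable def formInner (c : Fin 7 → ℝ) {k : ℕ} (α β : Form k) : ℝ :=
  ((k.factorial : ℕ) : ℝ)⁻¹ *
    ∑ f : Fin k → Fin 7,
      (∏ i, c (f i))⁻¹ * (α (fun i => stdB (f i)) * β (fun i => stdB (f i)))

/-- Natural action of an endomorphism `D` on a `k`-form:
`(D.α)(v₁,…,v_k) = ∑ᵢ α(v₁,…,D vᵢ,…,v_k)`. -/
def actD {k : ℕ} (D : V7 → V7) (α : Form k) : Form k := fun v =>
  ∑ i : Fin k, α (Function.update v i (D (v i)))

/-- The Jacobi identity for a bilinear bracket. -/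
def Jacobi (br : V7 → V7 → V7) : Prop :=
  ∀ x y z : V7, br (br x y) z + br (br y z) x + br (br z x) y = 0

/-- Unimodularity: `tr (ad x) = 0` for all `x`. -/
def Unimodular (br : V7 → V7 → V7) : Prop :=
  ∀ x : V7, ∑ i : Fin 7, br x (stdB i) i = 0

/-- Derivation property for a map `D`. -/
def IsDeriv (br : V7 → V7 → V7) (D : V7 → V7) : Prop :=
  ∀ x y : V7, D (br x y) = br (D x) y + br x (D y)

/-- Derived series of a bracket. -/
def derSeries (br : V7 → V7 → V7) : ℕ → Submodule ℝ V7
  | 0 => ⊤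
  | n + 1 => Submodule.span ℝ
      {z | ∃ x ∈ derSeries br n, ∃ y ∈ derSeries br n, z = br x y}

/-- Solvability: the derived series terminates at zero. -/
def Solvable (br : V7 → V7 → V7) : Prop := ∃ n, derSeries br n = ⊥

/-- Real cube root (the real root, also for negative arguments). -/
noncomputable def cbrt (x : ℝ) : ℝ :=
  if x < 0 then -((-x) ^ ((1 : ℝ) / 3)) else x ^ ((1 : ℝ) / 3)

/-- The standard volume form `e^{1234567}`. -/
def vol7 : Form 7 := eB ![0, 1, 2, 3, 4, 5, 6]

end G2Solitons

namespace G2Solitons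

noncomputable section

/-- The bracket of the Lie algebra `𝔤_μ` with structure equations
`(e⁴⁵, -2μ e²⁷, -2 e³⁷, 2 e¹⁵, e¹⁴, 2(1+μ) e⁶⁷, 0)`,
via the convention `dα(x,y) = -α([x,y])`. -/
def brG (μ : ℝ) : V7 → V7 → V7 := fun x y =>
  ![-(x 3 * y 4 - x 4 * y 3),
    2 * μ * (x 1 * y 6 - x 6 * y 1),
    2 * (x 2 * y 6 - x 6 * y 2),
    -2 * (x 0 * y 4 - x 4 * y 0),
    -(x 0 * y 3 - x 3 * y 0),
    -2 * (1 + μ) * (x 5 * y 6 - x 6 * y 5),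
    0]

/-- `φ_μ = -2μ e¹²⁷ + e³⁴⁷ + 2(1+μ) e⁵⁶⁷ + e¹³⁵ - e¹⁴⁶ - e²³⁶ - e²⁴⁵`. -/
def phiG (μ : ℝ) : Form 3 := fun v =>
  -2 * μ * eB ![0, 1, 6] v + eB ![2, 3, 6] v + 2 * (1 + μ) * eB ![4, 5, 6] v
    + eB ![0, 2, 4] v - eB ![0, 3, 5] v - eB ![1, 2, 5] v - eB ![1, 3, 4] v

/-- Diagonal coefficients of the metric
`g_{φ_μ} = (2μ²/(1+μ))^{1/3}[(e¹)²+(e²)²] + (-4μ(1+μ))^{-1/3}[(e³)²+(e⁴)²]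
  + (2(1+μ)/(-μ))^{1/3}[(e⁵)²+(e⁶)²] + ((4μ(1+μ))²)^{1/3}(e⁷)²`. -/
noncomputable def cG (μ : ℝ) : Fin 7 → ℝ :=
  ![(2 * μ ^ 2 / (1 + μ)) ^ ((1 : ℝ) / 3),
    (2 * μ ^ 2 / (1 + μ)) ^ ((1 : ℝ) / 3),
    (-(4 * μ * (1 + μ))) ^ (-(1 : ℝ) / 3),
    (-(4 * μ * (1 + μ))) ^ (-(1 : ℝ) / 3),
    (2 * (1 + μ) / (-μ)) ^ ((1 : ℝ) / 3),
    (2 * (1 + μ) / (-μ)) ^ ((1 : ℝ) / 3),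
    ((4 * μ * (1 + μ)) ^ 2) ^ ((1 : ℝ) / 3)]

/-- The metric `g_{φ_μ}` as a bilinear form. -/
noncomputable def gG (μ : ℝ) (u v : V7) : ℝ := ∑ i : Fin 7, cG μ i * u i * v i

/-- The volume form `dV_{φ_μ} = (-4μ(1+μ))^{1/3} e¹²³⁴⁵⁶⁷`. -/
noncomputable def dVG (μ : ℝ) : Form 7 := fun v =>
  (-(4 * μ * (1 + μ))) ^ ((1 : ℝ) / 3) * vol7 v

/-- `τ_μ = -2(2μ²/(1+μ))^{1/3} e¹² + ((2/(μ(1+μ)))²)^{1/3} e³⁴ - 2((2(1+μ)²/μ)²)^{1/3} e⁵⁶`. -/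
noncomputable def tauG (μ : ℝ) : Form 2 := fun v =>
  -2 * (2 * μ ^ 2 / (1 + μ)) ^ ((1 : ℝ) / 3) * eB ![0, 1] v
    + ((2 / (μ * (1 + μ))) ^ 2) ^ ((1 : ℝ) / 3) * eB ![2, 3] v
    - 2 * ((2 * (1 + μ) ^ 2 / μ) ^ 2) ^ ((1 : ℝ) / 3) * eB ![4, 5] v

/-- `D_μ = -2 diag(0, (4(1+μ)/μ²)^{1/3}, (4μ(1+μ))^{1/3}, 0, 0, -(4μ/(1+μ)²)^{1/3}, 0)`
with real cube roots. -/
noncomputable def DG (μ : ℝ) : V7 → V7 := fun x i =>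
  -2 * (![0, cbrt (4 * (1 + μ) / μ ^ 2), cbrt (4 * μ * (1 + μ)), 0, 0,
          -cbrt (4 * μ / (1 + μ) ^ 2), 0] i) * x i

/-- `λ_μ = 2(μ² + μ + 1)((2/(μ(1+μ)))²)^{1/3}`. -/
noncomputable def lamG (μ : ℝ) : ℝ :=
  2 * (μ ^ 2 + μ + 1) * ((2 / (μ * (1 + μ))) ^ 2) ^ ((1 : ℝ) / 3)

end

end G2Solitons

namespace G2Solitons

private lemma f7_5 (a : ℝ) (u : Fin 6 → ℝ) : Matrix.vecCons a u 5 = u 4 := rfl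
private lemma f7_6 (a : ℝ) (u : Fin 6 → ℝ) : Matrix.vecCons a u 6 = u 5 := rfl
private lemma f6_5 (a : ℝ) (u : Fin 5 → ℝ) : Matrix.vecCons a u 5 = u 4 := rfl

set_option maxHeartbeats 2000000 in
/-- the structure equations of `𝔤_μ` satisfy the Jacobi identity. -/
theorem jacobi_brG (μ : ℝ) (hμ₁ : -1 < μ) (hμ₂ : μ ≤ -1/2) :
    Jacobi (brG μ) := by
  intro x y z
  simp only [brG]
  funext i
  fin_cases i <;> simp [f7_5, f7_6, f6_5] <;> ring

end G2Solitons
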